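/- The K×K determinant det[C(2j+i-3, K-1)]_{i,j=1}^K equals det[C(2j-2, K-i)]_{i,j=1}^K, which equals (-2)^(K(K-1)/2). -/

import Mathlib

open Equiv Matrix Polynomial Finset


lemma revPerm_succ_decompose (n : ℕ) :
    (Fin.revPerm : Equiv.Perm (Fin (n+1))) =
      Equiv.Perm.decomposeFin.symm (Fin.last n, Fin.revPerm * finRotate n) := by
  ext i
  refine Fin.cases ?_ (fun x => ?_) i
  · simp [Fin.rev_zero]
  · rw [Equiv.Perm.decomposeFin_symm_apply_succ]
    cases n with
    | zero => exact x.elim0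
    | succ m =>
      rcases eq_or_ne x (Fin.last m) with h | h
      · subst h
        simp [Equiv.swap_apply_def, Fin.ext_iff, coe_finRotate]
      · have hx : (x : ℕ) < m := Fin.val_lt_last h
        have hval : ((x + 1 : Fin (m+1)) : ℕ) = (x : ℕ) + 1 :=
          Fin.val_add_one_of_lt (Fin.lt_last_iff_ne_last.mpr h)
        rw [Equiv.swap_apply_def]
        split_ifs with h1 h2 <;>
          simp_all [Fin.ext_iff, coe_finRotate] <;> omega

lemma sign_revPerm (n : ℕ) :
    Equiv.Perm.sign (Fin.revPerm : Equiv.Perm (Fin n)) = (-1) ^ (n * (n-1) / 2) := by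
  induction n with
  | zero => simp [Subsingleton.elim (Fin.revPerm : Equiv.Perm (Fin 0)) 1]
  | succ n ih =>
    rw [revPerm_succ_decompose, Equiv.Perm.decomposeFin.symm_sign, _root_.map_mul, ih]
    cases n with
    | zero => simp
    | succ m =>
      rw [sign_finRotate]
      have hlast : (Fin.last (m+1)) ≠ 0 := by simp [Fin.ext_iff]
      rw [if_neg hlast]
      have he : (m+2) * (m+2-1) / 2 = (m+1) * ((m+1)-1) / 2 + (m+1) := by
        have h0 : m+2-1 = m+1 := rfl
        have h0' : (m+1)-1 = m := rfl
        rw [h0, h0']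
        have h1 : (m+2) * (m+1) = m*(m+1) + 2*(m+1) := by ring
        have h1' : (m+1) * m = m*(m+1) := by ring
        have h2 : (m*(m+1)) % 2 = 0 := Nat.even_iff.mp (Nat.even_mul_succ_self m)
        omega
      rw [he, pow_add, pow_succ]
      rw [mul_comm ((-1:ℤˣ)) _, mul_assoc]
      rfl

lemma factorA (K : ℕ) (hK : 0 < K) :
    (Matrix.of fun i j : Fin K => ((2 * (j:ℕ) + (i:ℕ)).choose (K-1) : ℤ)) =
    (Matrix.of fun i t : Fin K => ((i:ℕ).choose (t:ℕ) : ℤ)) *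
    (Matrix.of fun t j : Fin K => ((2 * (j:ℕ)).choose (K-1-(t:ℕ)) : ℤ)) := by
  ext i j
  rw [Matrix.mul_apply]
  simp only [Matrix.of_apply]
  have key : (2*(j:ℕ) + (i:ℕ)).choose (K-1)
      = ∑ t ∈ Finset.range K, (i:ℕ).choose t * (2*(j:ℕ)).choose (K-1-t) := by
    rw [add_comm, Nat.add_choose_eq, Finset.Nat.sum_antidiagonal_eq_sum_range_succ_mk,
      Nat.succ_eq_add_one]
    have h : K - 1 + 1 = K := by omega
    rw [h]
  rw [key, Nat.cast_sum, ← Fin.sum_univ_eq_sum_range (fun t => (((i:ℕ).choose t * (2*(j:ℕ)).choose (K-1-t) : ℕ) : ℤ)) K]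
  push_cast
  rfl

lemma detP (K : ℕ) :
    (Matrix.of fun i t : Fin K => ((i:ℕ).choose (t:ℕ) : ℤ)).det = 1 := by
  have hbt : (Matrix.of fun i t : Fin K => ((i:ℕ).choose (t:ℕ) : ℤ)).BlockTriangular
      OrderDual.toDual := by
    intro i j h
    have hij : i < j := h
    simp only [Matrix.of_apply]
    exact_mod_cast congrArg (Nat.cast (R := ℤ)) (Nat.choose_eq_zero_of_lt hij)
  rw [Matrix.det_of_lowerTriangular _ hbt]
  simp

noncomputable def bp (b : ℕ) : ℚ[X] :=
  Polynomial.C ((b.factorial : ℚ))⁻¹ * ((descPochhammer ℚ b).comp (Polynomial.C 2 * X))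

lemma bp_natDegree (b : ℕ) : (bp b).natDegree = b := by
  rw [bp, natDegree_C_mul (by positivity), natDegree_comp, descPochhammer_natDegree,
    natDegree_C_mul (two_ne_zero), natDegree_X, mul_one]

lemma bp_coeff (b : ℕ) : (bp b).coeff b = 2^b * ((b.factorial : ℚ))⁻¹ := by
  have hld : ((descPochhammer ℚ b).comp (Polynomial.C 2 * X)).leadingCoeff = 2^b := by
    rw [leadingCoeff_comp (by simp [natDegree_C_mul (two_ne_zero (α := ℚ))]),
      (monic_descPochhammer ℚ b).leadingCoeff, descPochhammer_natDegree, one_mul]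
    simp [leadingCoeff, natDegree_C_mul (two_ne_zero (α := ℚ))]
  have hdeg : ((descPochhammer ℚ b).comp (Polynomial.C 2 * X)).natDegree = b := by
    rw [natDegree_comp, descPochhammer_natDegree, natDegree_C_mul (two_ne_zero (α := ℚ)),
      natDegree_X, mul_one]
  have h3 : ((descPochhammer ℚ b).comp (Polynomial.C 2 * X)).coeff b
      = ((descPochhammer ℚ b).comp (Polynomial.C 2 * X)).leadingCoeff := by
    rw [leadingCoeff, hdeg]
  rw [bp, coeff_C_mul, mul_comm, h3, hld]

lemma bp_eval (b a : ℕ) : (bp b).eval (a : ℚ) = ((2*a).choose b : ℚ) := by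
  rw [bp, eval_mul, eval_C, eval_comp, eval_mul, eval_C, eval_X]
  have : (2 : ℚ) * a = ((2*a : ℕ) : ℚ) := by push_cast; ring
  rw [this, descPochhammer_eval_eq_descFactorial, Nat.descFactorial_eq_factorial_mul_choose]
  push_cast
  rw [← mul_assoc]
  rw [inv_mul_cancel₀ (by positivity), one_mul]

lemma detN (n : ℕ) :
    (Matrix.of fun a b : Fin (n+1) => (bp b).eval ((a:ℕ) : ℚ)).det
      = (Nat.superFactorial n : ℚ) * ∏ b : Fin (n+1), (2^(b:ℕ) * (((b:ℕ).factorial : ℚ))⁻¹) := by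
  rw [Matrix.eval_matrixOfPolynomials_eq_vandermonde_mul_matrixOfPolynomials _ (fun b : Fin (n+1) => bp (b:ℕ))
      (fun i => le_of_eq (bp_natDegree i)), Matrix.det_mul]
  congr 1
  · exact Matrix.det_vandermonde_id_eq_superFactorial n
  · rw [Matrix.det_of_upperTriangular (Matrix.matrixOfPolynomials_blockTriangular (fun b : Fin (n+1) => bp (b:ℕ))
      (fun i => le_of_eq (bp_natDegree i)))]
    exact Finset.prod_congr rfl (fun b _ => bp_coeff b)

lemma prod_fact (n : ℕ) :
    ∏ b : Fin (n+1), (((b:ℕ).factorial : ℚ)) = (Nat.superFactorial n : ℚ) := by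
  rw [Fin.prod_univ_eq_prod_range (fun b => ((b.factorial : ℚ))), ← Nat.cast_prod,
    Nat.prod_range_succ_factorial]

lemma arith (n : ℕ) :
    (Nat.superFactorial n : ℚ) * ∏ b : Fin (n+1), (2^(b:ℕ) * (((b:ℕ).factorial : ℚ))⁻¹)
      = 2 ^ ((n+1) * n / 2) := by
  have hsf : (Nat.superFactorial n : ℚ) ≠ 0 := by
    have : 0 < Nat.superFactorial n := by
      rw [← Nat.prod_range_succ_factorial]
      exact Finset.prod_pos fun i _ => i.factorial_pos
    exact_mod_cast this.ne'
  rw [Finset.prod_mul_distrib, (Finset.prod_inv_distrib (f := fun b : Fin (n+1) => (((b:ℕ).factorial : ℚ)))), prod_fact]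
  rw [show ((Nat.superFactorial n : ℚ)) * (((∏ b : Fin (n+1), ((2:ℚ)^(b:ℕ))) * (Nat.superFactorial n : ℚ)⁻¹)) = ((Nat.superFactorial n : ℚ) * (Nat.superFactorial n : ℚ)⁻¹) * ∏ b : Fin (n+1), ((2:ℚ)^(b:ℕ)) from by ring]
  rw [mul_inv_cancel₀ hsf, one_mul, Finset.prod_pow_eq_pow_sum]
  congr 1
  rw [Fin.sum_univ_eq_sum_range (fun b => b), Finset.sum_range_id, Nat.add_sub_cancel]

lemma detM (n : ℕ) :
    (Matrix.of fun i j : Fin (n+1) => (((2*(j:ℕ)).choose (i:ℕ) : ℚ))).det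
      = 2 ^ ((n+1) * n / 2) := by
  have hMN : (Matrix.of fun i j : Fin (n+1) => (((2*(j:ℕ)).choose (i:ℕ) : ℚ)))
      = (Matrix.of fun a b : Fin (n+1) => (bp (b:ℕ)).eval ((a:ℕ) : ℚ))ᵀ := by
    ext i j
    simp [Matrix.transpose_apply, bp_eval]
  rw [hMN, Matrix.det_transpose, detN, arith]

lemma detBQ (n : ℕ) :
    (Matrix.of fun i j : Fin (n+1) => (((2*(j:ℕ)).choose (n - (i:ℕ)) : ℚ))).det
      = (-2) ^ ((n+1) * n / 2) := by
  have hperm : (Matrix.of fun i j : Fin (n+1) => (((2*(j:ℕ)).choose (n - (i:ℕ)) : ℚ)))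
      = (Matrix.of fun i j : Fin (n+1) => (((2*(j:ℕ)).choose (i:ℕ) : ℚ))).submatrix
          Fin.revPerm id := by
    ext i j
    simp only [Matrix.submatrix_apply, id_eq]
    simp only [Matrix.of_apply, Fin.revPerm_apply, Fin.val_rev]
    congr 2
    omega
  rw [hperm, Matrix.det_permute, detM, sign_revPerm]
  have : (n+1) * ((n+1) - 1) / 2 = (n+1) * n / 2 := by rw [Nat.add_sub_cancel]
  rw [this]
  push_cast
  rw [← neg_one_mul (2:ℚ), mul_pow]

theorem symplectic_binom_det (K : ℕ) (hK : 0 < K) :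
    (Matrix.of fun i j : Fin K =>
        ((2 * (j : ℕ) + (i : ℕ)).choose (K - 1) : ℤ)).det =
      (Matrix.of fun i j : Fin K =>
        ((2 * (j : ℕ)).choose (K - 1 - (i : ℕ)) : ℤ)).det ∧
    (Matrix.of fun i j : Fin K =>
        ((2 * (j : ℕ) + (i : ℕ)).choose (K - 1) : ℤ)).det =
      (-2) ^ (K * (K - 1) / 2) := by
  have h1 : (Matrix.of fun i j : Fin K =>
        ((2 * (j : ℕ) + (i : ℕ)).choose (K - 1) : ℤ)).det =
      (Matrix.of fun i j : Fin K =>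
        ((2 * (j : ℕ)).choose (K - 1 - (i : ℕ)) : ℤ)).det := by
    rw [factorA K hK, Matrix.det_mul, detP, one_mul]
  refine ⟨h1, h1.trans ?_⟩
  obtain ⟨n, rfl⟩ : ∃ n, K = n + 1 := ⟨K - 1, by omega⟩
  have e1 : n + 1 - 1 = n := rfl
  have e2 : (n+1) * ((n+1) - 1) / 2 = (n+1) * n / 2 := by rw [Nat.add_sub_cancel]
  rw [e1]
  apply (Int.cast_injective (α := ℚ))
  rw [show ((Int.cast : ℤ → ℚ) = (Int.castRingHom ℚ)) from rfl, RingHom.map_det]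
  have hmap : (Matrix.of fun i j : Fin (n+1) => ((2 * (j : ℕ)).choose (n - (i : ℕ)) : ℤ)).map
        (Int.castRingHom ℚ)
      = (Matrix.of fun i j : Fin (n+1) => (((2*(j:ℕ)).choose (n - (i:ℕ)) : ℚ))) := by
    ext i j
    simp
  rw [RingHom.mapMatrix_apply, hmap, detBQ, map_pow]
  norm_num
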